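/- In a densest-subset instance, if P₁ and P₂ are both densest subsets, then P₁ ∪ P₂ is a densest subset, and if moreover P₁ ∩ P₂ ≠ ∅, then P₁ ∩ P₂ is also a densest subset. Consequently, there is a unique maximal densest subset, and it contains every densest subset. -/

import Mathlib

open Finset

/-- A densest-subset instance: a finite set `U` with positive vertex weights, two finite
indexed families `Ie` and `Se` of nonempty subsets of `U` (repetitions allowed), and a
positive value for each member. -/
structure DSInstance (U : Type*) [Fintype U] [DecidableEq U] where
  w : U → ℝ
  w_pos : ∀ v : U, 0 < w v
  nI : ℕ
  nS : ℕ
  Ie : Fin nI → Finset U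
  Se : Fin nS → Finset U
  Ic : Fin nI → ℝ
  Sc : Fin nS → ℝ
  Ie_nonempty : ∀ i, (Ie i).Nonempty
  Se_nonempty : ∀ i, (Se i).Nonempty
  Ic_pos : ∀ i, 0 < Ic i
  Sc_pos : ∀ i, 0 < Sc i

namespace DSInstance

variable {U : Type*} [Fintype U] [DecidableEq U]

/-- `c(I_X)`: the total value of members of `I` contained in `X`. -/
noncomputable def cI (D : DSInstance U) (X : Finset U) : ℝ :=
  ∑ i ∈ Finset.univ.filter (fun i => D.Ie i ⊆ X), D.Ic i

/-- `c(S_X)`: the total value of members of `S` intersecting `X`. -/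
noncomputable def cS (D : DSInstance U) (X : Finset U) : ℝ :=
  ∑ i ∈ Finset.univ.filter (fun i => (D.Se i ∩ X).Nonempty), D.Sc i

/-- `w(X)`: the total weight of the vertices in `X`. -/
noncomputable def wX (D : DSInstance U) (X : Finset U) : ℝ := ∑ v ∈ X, D.w v

/-- The density `δ(X) = (c(I_X) − c(S_X))/w(X)`. -/
noncomputable def delta (D : DSInstance U) (X : Finset U) : ℝ :=
  (D.cI X - D.cS X) / D.wX X

/-- A densest subset: a nonempty `P` maximizing `δ` among nonempty subsets. -/
def IsDensest (D : DSInstance U) (P : Finset U) : Prop :=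
  P.Nonempty ∧ ∀ X : Finset U, X.Nonempty → D.delta X ≤ D.delta P

end DSInstance

namespace DSAux

open DSInstance

variable {U : Type*} [Fintype U] [DecidableEq U]

lemma cI_super (D : DSInstance U) (X Y : Finset U) :
    D.cI X + D.cI Y ≤ D.cI (X ∪ Y) + D.cI (X ∩ Y) := by
  classical
  simp only [DSInstance.cI, Finset.sum_filter]
  rw [← Finset.sum_add_distrib, ← Finset.sum_add_distrib]
  refine Finset.sum_le_sum fun i _ => ?_
  have hc := (D.Ic_pos i).le
  by_cases hX : D.Ie i ⊆ X <;> by_cases hY : D.Ie i ⊆ Y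
  · have hU : D.Ie i ⊆ X ∪ Y := hX.trans Finset.subset_union_left
    have hI : D.Ie i ⊆ X ∩ Y := Finset.subset_inter hX hY
    simp [hX, hY, hU, hI]
  · have hU : D.Ie i ⊆ X ∪ Y := hX.trans Finset.subset_union_left
    have hI : ¬ D.Ie i ⊆ X ∩ Y := fun h => hY (h.trans Finset.inter_subset_right)
    simp [hX, hY, hU, hI]
  · have hU : D.Ie i ⊆ X ∪ Y := hY.trans Finset.subset_union_right
    have hI : ¬ D.Ie i ⊆ X ∩ Y := fun h => hX (h.trans Finset.inter_subset_left)
    simp [hX, hY, hU, hI]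
  · have hI : ¬ D.Ie i ⊆ X ∩ Y := fun h => hX (h.trans Finset.inter_subset_left)
    simp only [hX, hY, hI, if_false, add_zero, zero_add]
    split_ifs <;> simp [hc]

lemma cS_sub (D : DSInstance U) (X Y : Finset U) :
    D.cS (X ∪ Y) + D.cS (X ∩ Y) ≤ D.cS X + D.cS Y := by
  classical
  simp only [DSInstance.cS, Finset.sum_filter]
  rw [← Finset.sum_add_distrib, ← Finset.sum_add_distrib]
  refine Finset.sum_le_sum fun i _ => ?_
  have hc := (D.Sc_pos i).le
  have hU : (D.Se i ∩ (X ∪ Y)).Nonempty ↔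
      (D.Se i ∩ X).Nonempty ∨ (D.Se i ∩ Y).Nonempty := by
    constructor
    · rintro ⟨x, hx⟩
      simp only [Finset.mem_inter, Finset.mem_union] at hx
      rcases hx.2 with h | h
      · exact Or.inl ⟨x, Finset.mem_inter.2 ⟨hx.1, h⟩⟩
      · exact Or.inr ⟨x, Finset.mem_inter.2 ⟨hx.1, h⟩⟩
    · rintro (⟨x, hx⟩ | ⟨x, hx⟩) <;> simp only [Finset.mem_inter] at hx
      · exact ⟨x, Finset.mem_inter.2 ⟨hx.1, Finset.mem_union_left _ hx.2⟩⟩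
      · exact ⟨x, Finset.mem_inter.2 ⟨hx.1, Finset.mem_union_right _ hx.2⟩⟩
  have hIX : (D.Se i ∩ (X ∩ Y)).Nonempty → (D.Se i ∩ X).Nonempty := by
    rintro ⟨x, hx⟩
    simp only [Finset.mem_inter] at hx
    exact ⟨x, Finset.mem_inter.2 ⟨hx.1, hx.2.1⟩⟩
  have hIY : (D.Se i ∩ (X ∩ Y)).Nonempty → (D.Se i ∩ Y).Nonempty := by
    rintro ⟨x, hx⟩
    simp only [Finset.mem_inter] at hx
    exact ⟨x, Finset.mem_inter.2 ⟨hx.1, hx.2.2⟩⟩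
  by_cases hX : (D.Se i ∩ X).Nonempty <;> by_cases hY : (D.Se i ∩ Y).Nonempty
  · have hu : (D.Se i ∩ (X ∪ Y)).Nonempty := hU.2 (Or.inl hX)
    simp only [hX, hY, hu, if_true]
    split_ifs <;> simp [hc]
  · have hu : (D.Se i ∩ (X ∪ Y)).Nonempty := hU.2 (Or.inl hX)
    have hi : ¬ (D.Se i ∩ (X ∩ Y)).Nonempty := fun h => hY (hIY h)
    simp [hX, hY, hu, hi]
  · have hu : (D.Se i ∩ (X ∪ Y)).Nonempty := hU.2 (Or.inr hY)
    have hi : ¬ (D.Se i ∩ (X ∩ Y)).Nonempty := fun h => hX (hIX h)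
    simp [hX, hY, hu, hi]
  · have hu : ¬ (D.Se i ∩ (X ∪ Y)).Nonempty := fun h => (hU.1 h).elim hX hY
    have hi : ¬ (D.Se i ∩ (X ∩ Y)).Nonempty := fun h => hX (hIX h)
    simp [hX, hY, hu, hi]

lemma wX_pos (D : DSInstance U) {X : Finset U} (hX : X.Nonempty) : 0 < D.wX X :=
  Finset.sum_pos (fun v _ => D.w_pos v) hX

lemma f_le (D : DSInstance U) {P : Finset U} (hP : D.IsDensest P) (X : Finset U) :
    D.cI X - D.cS X ≤ D.delta P * D.wX X := by
  rcases X.eq_empty_or_nonempty with rfl | hX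
  · have h1 : D.cI (∅ : Finset U) = 0 := by
      rw [DSInstance.cI]
      apply Finset.sum_eq_zero_iff_of_nonneg (fun i _ => (D.Ic_pos i).le) |>.2
      intro i hi
      simp only [Finset.mem_filter, Finset.subset_empty] at hi
      exact absurd hi.2 (D.Ie_nonempty i).ne_empty
    have h2 : D.cS (∅ : Finset U) = 0 := by
      rw [DSInstance.cS]
      apply Finset.sum_eq_zero_iff_of_nonneg (fun i _ => (D.Sc_pos i).le) |>.2
      intro i hi
      simp at hi
    simp [h1, h2, DSInstance.wX]
  · have hw := wX_pos D hX
    have h := hP.2 X hX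
    rw [DSInstance.delta, div_le_iff₀ hw] at h
    exact h

lemma f_eq (D : DSInstance U) {P : Finset U} (hP : D.IsDensest P) :
    D.cI P - D.cS P = D.delta P * D.wX P := by
  have hw := (wX_pos D hP.1).ne'
  rw [DSInstance.delta, div_mul_cancel₀ _ hw]

lemma union_inter_densest (D : DSInstance U) (P₁ P₂ : Finset U)
    (h1 : D.IsDensest P₁) (h2 : D.IsDensest P₂) :
    D.IsDensest (P₁ ∪ P₂) ∧ ((P₁ ∩ P₂).Nonempty → D.IsDensest (P₁ ∩ P₂)) := by
  classical
  have hdd : D.delta P₂ = D.delta P₁ := le_antisymm (h1.2 P₂ h2.1) (h2.2 P₁ h1.1)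
  have hw : D.wX (P₁ ∪ P₂) + D.wX (P₁ ∩ P₂) = D.wX P₁ + D.wX P₂ := by
    rw [DSInstance.wX, DSInstance.wX, DSInstance.wX, DSInstance.wX]
    exact Finset.sum_union_inter
  have hkey : D.cI P₁ - D.cS P₁ + (D.cI P₂ - D.cS P₂) ≤
      (D.cI (P₁ ∪ P₂) - D.cS (P₁ ∪ P₂)) + (D.cI (P₁ ∩ P₂) - D.cS (P₁ ∩ P₂)) := by
    have := cI_super D P₁ P₂
    have := cS_sub D P₁ P₂
    linarith
  have e1 := f_eq D h1
  have e2 := f_eq D h2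
  rw [hdd] at e2
  have hw' : D.delta P₁ * D.wX (P₁ ∪ P₂) + D.delta P₁ * D.wX (P₁ ∩ P₂) =
      D.delta P₁ * D.wX P₁ + D.delta P₁ * D.wX P₂ := by
    rw [← mul_add, ← mul_add, hw]
  have bU := f_le D h1 (P₁ ∪ P₂)
  have bI := f_le D h1 (P₁ ∩ P₂)
  have eU : D.cI (P₁ ∪ P₂) - D.cS (P₁ ∪ P₂) = D.delta P₁ * D.wX (P₁ ∪ P₂) := by
    linarith [bU, bI, hkey, e1, e2, hw']
  have eI : D.cI (P₁ ∩ P₂) - D.cS (P₁ ∩ P₂) = D.delta P₁ * D.wX (P₁ ∩ P₂) := by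
    linarith [bU, bI, hkey, e1, e2, hw']
  have hUne : (P₁ ∪ P₂).Nonempty := h1.1.mono Finset.subset_union_left
  have dU : D.delta (P₁ ∪ P₂) = D.delta P₁ := by
    rw [DSInstance.delta, eU, mul_div_assoc, div_self (wX_pos D hUne).ne', mul_one]
  constructor
  · exact ⟨hUne, fun X hX => (h1.2 X hX).trans_eq dU.symm⟩
  · intro hIne
    have dI : D.delta (P₁ ∩ P₂) = D.delta P₁ := by
      rw [DSInstance.delta, eI, mul_div_assoc, div_self (wX_pos D hIne).ne', mul_one]
    exact ⟨hIne, fun X hX => (h1.2 X hX).trans_eq dI.symm⟩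

end DSAux

/-- Properties of densest subsets: the union of two densest subsets is densest, a nonempty
intersection of two densest subsets is densest, and there is a unique maximal densest
subset containing every densest subset. -/
theorem densest_subsets_lattice {U : Type*} [Fintype U] [DecidableEq U]
    (D : DSInstance U) (P₁ P₂ : Finset U)
    (h1 : D.IsDensest P₁) (h2 : D.IsDensest P₂) :
    D.IsDensest (P₁ ∪ P₂) ∧
    ((P₁ ∩ P₂).Nonempty → D.IsDensest (P₁ ∩ P₂)) ∧
    ∃! M : Finset U, D.IsDensest M ∧ ∀ P : Finset U, D.IsDensest P → P ⊆ M := by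
  classical
  obtain ⟨hu, hi⟩ := DSAux.union_inter_densest D P₁ P₂ h1 h2
  refine ⟨hu, hi, ?_⟩
  have hsup : ∀ (s : Finset (Finset U)) (hs : s.Nonempty),
      (∀ P ∈ s, D.IsDensest P) → D.IsDensest (s.sup id) := by
    intro s hs
    refine Finset.Nonempty.cons_induction
      (motive := fun s _ => (∀ P ∈ s, D.IsDensest P) → D.IsDensest (s.sup id)) ?_ ?_ hs
    · intro P h; simpa using h P (by simp)
    · intro P s hP hsne ih h
      rw [Finset.sup_cons]
      have := (DSAux.union_inter_densest D P (s.sup id)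
        (h P (Finset.mem_cons_self _ _))
        (ih fun Q hQ => h Q (Finset.mem_cons_of_mem hQ))).1
      simpa [Finset.sup_eq_union] using this
  set 𝒟 : Finset (Finset U) := Finset.univ.filter (fun P => D.IsDensest P) with h𝒟
  have hmem : ∀ P, P ∈ 𝒟 ↔ D.IsDensest P := by simp [h𝒟]
  have hne : 𝒟.Nonempty := ⟨P₁, (hmem P₁).2 h1⟩
  refine ⟨𝒟.sup id, ⟨hsup 𝒟 hne (fun P hP => (hmem P).1 hP),
    fun P hP => Finset.le_sup (f := id) ((hmem P).2 hP)⟩, ?_⟩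
  rintro M ⟨hM, hMmax⟩
  exact Finset.Subset.antisymm
    (Finset.le_sup (f := id) ((hmem M).2 hM))
    (hMmax _ (hsup 𝒟 hne (fun P hP => (hmem P).1 hP)))
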